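/- Let E = EuclideanSpace ℝ (Fin 3), let h : E → ℝ be continuously differentiable, let λ : E → ℝ be continuous with λ(y) ≥ λ₀ for some λ₀ > 0 and all y, and define the guidance field v(y) = λ(y) • ∇h(y). Let k_nom : E → E and γ > 0, define a(y) = ⟪v(y), k_nom(y)⟫ + γ·h(y), and on the set where v(y) ≠ 0 define the safety-filtered controller k_QP(y) = k_nom(y) + (max(0, -a(y))/‖v(y)‖²) • v(y). Suppose v(y) ≠ 0 for all y with h(y) ≥ 0, and let y : ℝ → E be differentiable with y'(t) = k_QP(y(t)) for all t ≥ 0 and h(y(0)) ≥ 0, and suppose t ↦ h(y(t)) is continuously differentiable. Then h(y(t)) ≥ 0 for all t ≥ 0: the QP safety filter renders the safe set C = {h ≥ 0} forward invariant for the single integrator ẏ = w. -/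

import Mathlib

open scoped RealInnerProductSpace

/-- The QP safety filter renders the safe set `{h ≥ 0}` forward invariant for the
single integrator: with guidance field `v = λ • ∇h` (`λ ≥ lam₀ > 0`), activation value
`a(y) = ⟪v(y), k_nom(y)⟫ + γ h(y)`, and filtered controller
`k_QP(y) = k_nom(y) + (ReLU(-a(y))/‖v(y)‖²) • v(y)`, closed-loop trajectories starting
in the safe set stay in it. -/
theorem qp_filter_forward_invariance
    (h : EuclideanSpace ℝ (Fin 3) → ℝ) (hh : ContDiff ℝ 1 h)
    (lam : EuclideanSpace ℝ (Fin 3) → ℝ) (hlam : Continuous lam)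
    (lam₀ : ℝ) (hlam₀ : 0 < lam₀) (hlam_lb : ∀ y, lam₀ ≤ lam y)
    (v : EuclideanSpace ℝ (Fin 3) → EuclideanSpace ℝ (Fin 3))
    (hv : ∀ y, v y = lam y • gradient h y)
    (knom : EuclideanSpace ℝ (Fin 3) → EuclideanSpace ℝ (Fin 3))
    (γ : ℝ) (hγ : 0 < γ)
    (a : EuclideanSpace ℝ (Fin 3) → ℝ)
    (hadef : ∀ y, a y = ⟪v y, knom y⟫ + γ * h y)
    (kQP : EuclideanSpace ℝ (Fin 3) → EuclideanSpace ℝ (Fin 3))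
    (hkQPdef : ∀ y, v y ≠ 0 → kQP y = knom y + (max 0 (-a y) / ‖v y‖ ^ 2) • v y)
    (hvnz : ∀ y, h y ≥ 0 → v y ≠ 0)
    (y : ℝ → EuclideanSpace ℝ (Fin 3)) (hy : Differentiable ℝ y)
    (hode : ∀ t, 0 ≤ t → deriv y t = kQP (y t))
    (h0 : h (y 0) ≥ 0)
    (hhy : ContDiff ℝ 1 (fun t => h (y t))) :
    ∀ t, 0 ≤ t → h (y t) ≥ 0 := by
  have hφdiff : Differentiable ℝ (fun t => h (y t)) := hhy.differentiable one_ne_zero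
  have hφcont : Continuous (fun t => h (y t)) := hφdiff.continuous
  -- gradient pairing
  have hgrad : ∀ (x w : EuclideanSpace ℝ (Fin 3)),
      ⟪gradient h x, w⟫ = fderiv ℝ h x w := by
    intro x w
    rw [gradient, InnerProductSpace.toDual_symm_apply]
  -- derivative of h∘y along the flow
  have hderiv : ∀ t : ℝ, 0 ≤ t →
      deriv (fun t => h (y t)) t = ⟪gradient h (y t), kQP (y t)⟫ := by
    intro t ht
    have h1 : HasDerivAt y (deriv y t) t := (hy t).hasDerivAt
    have h2 : HasFDerivAt h (fderiv ℝ h (y t)) (y t) :=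
      (hh.differentiable one_ne_zero (y t)).hasFDerivAt
    have h3 : HasDerivAt (fun t => h (y t)) (fderiv ℝ h (y t) (deriv y t)) t :=
      h2.comp_hasDerivAt t h1
    rw [h3.deriv, hode t ht, hgrad]
  -- key inequality: wherever v ≠ 0, λ ⟪∇h, kQP⟫ ≥ -γ h
  have hkey : ∀ x, v x ≠ 0 → lam x * ⟪gradient h x, kQP x⟫ ≥ -(γ * h x) := by
    intro x hvx
    have hnpos : (0:ℝ) < ‖v x‖ ^ 2 := pow_pos (norm_pos_iff.mpr hvx) 2
    have hvk : ⟪v x, kQP x⟫ = ⟪v x, knom x⟫ + max 0 (-a x) := by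
      rw [hkQPdef x hvx, inner_add_right, real_inner_smul_right, real_inner_self_eq_norm_sq]
      field_simp
    have hlv : ⟪v x, kQP x⟫ = lam x * ⟪gradient h x, kQP x⟫ := by
      rw [hv x, real_inner_smul_left]
    have hax := hadef x
    rcases le_total (a x) 0 with hc | hc
    · rw [max_eq_right (by linarith)] at hvk; linarith
    · rw [max_eq_left (by linarith)] at hvk; linarith
  -- strict increase where h < 0 but v ≠ 0
  have hpos : ∀ t : ℝ, 0 ≤ t → v (y t) ≠ 0 → h (y t) < 0 →
      0 < deriv (fun t => h (y t)) t := by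
    intro t ht hvt hφt
    have hl0 : 0 < lam (y t) := lt_of_lt_of_le hlam₀ (hlam_lb _)
    have hk := hkey (y t) hvt
    have hneg : 0 < -(γ * h (y t)) := by nlinarith
    have h1 : 0 < lam (y t) * ⟪gradient h (y t), kQP (y t)⟫ := lt_of_lt_of_le hneg hk
    have h2 : 0 < ⟪gradient h (y t), kQP (y t)⟫ := by
      by_contra hle
      push_neg at hle
      nlinarith
    rw [hderiv t ht]; exact h2
  -- continuity of t ↦ v (y t)
  have hvyc : Continuous (fun t => v (y t)) := by
    have hgc : Continuous (fun x => gradient h x) := by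
      have hfc : Continuous (fderiv ℝ h) := hh.continuous_fderiv one_ne_zero
      exact (InnerProductSpace.toDual ℝ (EuclideanSpace ℝ (Fin 3))).symm.continuous.comp hfc
    have hvc : Continuous v := by
      have : Continuous (fun x => lam x • gradient h x) := hlam.smul hgc
      simpa [funext hv] using this
    exact hvc.comp hy.continuous
  -- barrier argument
  intro t₁ ht₁
  by_contra hneg
  push_neg at hneg
  set S : Set ℝ := Set.Icc 0 t₁ ∩ {t | 0 ≤ h (y t)} with hS
  have hSne : S.Nonempty := ⟨0, ⟨le_refl 0, ht₁⟩, h0⟩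
  have hSclosed : IsClosed S := isClosed_Icc.inter (isClosed_le continuous_const hφcont)
  have hSbdd : BddAbove S := ⟨t₁, fun t ht => ht.1.2⟩
  set s := sSup S with hsdef
  have hsS : s ∈ S := hSclosed.csSup_mem hSne hSbdd
  have hs0 : 0 ≤ s := hsS.1.1
  have hst₁ : s ≤ t₁ := hsS.1.2
  have hslt : s < t₁ := lt_of_le_of_ne hst₁ (by
    intro hcontra
    exact absurd (hcontra ▸ hsS.2) (not_le.mpr hneg))
  have hφs : h (y s) = 0 := by
    by_contra hne
    have hφspos : 0 < h (y s) := lt_of_le_of_ne hsS.2 (Ne.symm hne)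
    have hopen : {u : ℝ | 0 < h (y u)} ∈ nhds s :=
      (isOpen_lt continuous_const hφcont).mem_nhds hφspos
    rcases Metric.mem_nhds_iff.mp hopen with ⟨ε, hε, hball⟩
    set u := min (s + ε / 2) t₁ with hu
    have hus : s < u := lt_min (by linarith) hslt
    have huS : u ∈ S := by
      refine ⟨⟨le_trans hs0 hus.le, min_le_right _ _⟩, ?_⟩
      have hd : dist u s < ε := by
        rw [Real.dist_eq, abs_of_pos (by linarith)]
        have : u ≤ s + ε / 2 := min_le_left _ _
        linarith
      exact le_of_lt (show 0 < h (y u) from hball hd)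
    exact absurd (le_csSup hSbdd huS) (not_le.mpr hus)
  -- find b > s with v (y ·) ≠ 0 on [s, b] ⊆ [s, t₁]
  have hvs : v (y s) ≠ 0 := hvnz _ (le_of_eq hφs.symm)
  have hopen : {u : ℝ | v (y u) ≠ 0} ∈ nhds s :=
    (isOpen_compl_singleton.preimage hvyc).mem_nhds hvs
  rcases Metric.mem_nhds_iff.mp hopen with ⟨ε, hε, hball⟩
  set b := min (s + ε / 2) t₁ with hb
  have hsb : s < b := lt_min (by linarith) hslt
  have hbt₁ : b ≤ t₁ := min_le_right _ _
  have hvne : ∀ u, s ≤ u → u ≤ b → v (y u) ≠ 0 := by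
    intro u h1 h2
    apply hball
    rw [Metric.mem_ball, Real.dist_eq, abs_of_nonneg (by linarith)]
    have : u ≤ s + ε / 2 := le_trans h2 (min_le_left _ _)
    linarith
  have hφb : h (y b) < 0 := by
    by_contra hge
    push_neg at hge
    exact absurd (le_csSup hSbdd ⟨⟨le_trans hs0 hsb.le, hbt₁⟩, hge⟩) (not_le.mpr hsb)
  obtain ⟨c, hc, hceq⟩ := exists_hasDerivAt_eq_slope (fun t => h (y t))
    (deriv (fun t => h (y t))) hsb hφcont.continuousOn
    (fun u _ => (hφdiff u).hasDerivAt)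
  have hφc : h (y c) < 0 := by
    by_contra hge
    push_neg at hge
    exact absurd (le_csSup hSbdd ⟨⟨le_trans hs0 hc.1.le, le_trans hc.2.le hbt₁⟩, hge⟩)
      (not_le.mpr hc.1)
  have hdc : 0 < deriv (fun t => h (y t)) c :=
    hpos c (le_trans hs0 hc.1.le) (hvne c hc.1.le hc.2.le) hφc
  rw [hceq] at hdc
  have hslope : (h (y b) - h (y s)) / (b - s) < 0 :=
    div_neg_of_neg_of_pos (by rw [hφs]; linarith) (by linarith)
  linarith
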